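/- For every n ≥ 1 and any two splits S and T of the same 2n points, S can be transformed into T by a finite sequence of split moves; in particular the split distance d(S,T) is finite and well defined for every pair of splits. -/

import Mathlib

attribute [local instance] Classical.propDecidable

namespace MultiCrossing

/-- `x` lies strictly in the open clockwise arc from `a` to `b` on the circle `ZMod (2*n)`. -/
def StrictBtw (n : ℕ) (a b x : ZMod (2 * n)) : Prop :=
  0 < (x - a).val ∧ (x - a).val < (b - a).val

/-- Two chords (with four distinct endpoints) cross: exactly one of the endpoints of one
chord lies in the open clockwise arc strictly between the endpoints of the other. -/
def Crosses (n : ℕ) (e f : Finset (ZMod (2 * n))) : Prop :=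
  ∃ a b c d : ZMod (2 * n), e = {a, b} ∧ f = {c, d} ∧ a ≠ b ∧ c ≠ d ∧
    Disjoint e f ∧ Xor' (StrictBtw n a b c) (StrictBtw n a b d)

/-- A split: a non-crossing perfect matching of the `2*n` points `ZMod (2*n)`. -/
structure IsSplit (n : ℕ) (S : Finset (Finset (ZMod (2 * n)))) : Prop where
  card_two : ∀ e ∈ S, e.card = 2
  partitions : ∀ x : ZMod (2 * n), ∃! e, e ∈ S ∧ x ∈ e
  noncrossing : ∀ e ∈ S, ∀ f ∈ S, ¬ Crosses n e f

/-- A split move transforms a split `S` into a different split `S'` sharing exactly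
`n - 2` chords with `S`. -/
def SplitMove (n : ℕ) (S S' : Finset (Finset (ZMod (2 * n)))) : Prop :=
  IsSplit n S ∧ IsSplit n S' ∧ S ≠ S' ∧ (S ∩ S').card = n - 2

/-- `ChainLen R k a b` : `b` is reachable from `a` in exactly `k` steps of the relation `R`. -/
def ChainLen {α : Type*} (R : α → α → Prop) : ℕ → α → α → Prop
  | 0, a, b => a = b
  | (k + 1), a, b => ∃ c, R a c ∧ ChainLen R k c b

/-- The split distance: the minimal number of split moves transforming `S` into `T`. -/
noncomputable def splitDist (n : ℕ) (S T : Finset (Finset (ZMod (2 * n)))) : ℕ :=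
  sInf {k | ChainLen (SplitMove n) k S T}

/-- circular difference on naturals -/
def dd (N P Q : ℕ) : ℕ := if Q ≤ P then P - Q else P + N - Q

lemma dd_cases (N P Q : ℕ) : (Q ≤ P ∧ dd N P Q = P - Q) ∨ (P < Q ∧ dd N P Q = P + N - Q) := by
  unfold dd; split_ifs with h <;> omega

lemma dd_zero (N P : ℕ) : dd N P 0 = P := by simp [dd]

variable {n : ℕ}

lemma val_sub' [NeZero (2*n)] (p q : ZMod (2*n)) :
    (p - q).val = dd (2*n) p.val q.val := by
  have hq : q.val ≤ 2*n := (ZMod.val_lt q).le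
  have h1 : ((p.val + (2*n - q.val) : ℕ) : ZMod (2*n)) = p - q := by
    rw [Nat.cast_add, Nat.cast_sub hq, ZMod.natCast_self, ZMod.natCast_val, ZMod.cast_id,
      ZMod.natCast_val, ZMod.cast_id]
    ring
  rw [← h1, ZMod.val_natCast]
  have hp : p.val < 2*n := ZMod.val_lt p
  have hq' : q.val < 2*n := ZMod.val_lt q
  rcases le_or_gt q.val p.val with h | h
  · have : p.val + (2*n - q.val) = (p.val - q.val) + 2*n := by omega
    rw [this, Nat.add_mod_right, Nat.mod_eq_of_lt (by omega)]
    unfold dd; rw [if_pos h]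
  · rw [Nat.mod_eq_of_lt (by omega)]
    unfold dd; rw [if_neg (by omega)]; omega

lemma val_eq_iff [NeZero (2*n)] (p q : ZMod (2*n)) : p.val = q.val ↔ p = q :=
  ⟨fun h => ZMod.val_injective _ h, fun h => by rw [h]⟩

/-- StrictBtw relative to a base point. -/
lemma btw_rel [NeZero (2*n)] (a x y z : ZMod (2*n)) :
    StrictBtw n x y z ↔ 0 < dd (2*n) (z-a).val (x-a).val ∧
      dd (2*n) (z-a).val (x-a).val < dd (2*n) (y-a).val (x-a).val := by
  have h1 : z - x = (z-a) - (x-a) := by ring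
  have h2 : y - x = (y-a) - (x-a) := by ring
  rw [StrictBtw, h1, h2, val_sub' (z-a) (x-a), val_sub' (y-a) (x-a)]

lemma val_add_one (hn : 1 ≤ n) (p : ZMod (2*n)) :
    haveI : NeZero (2*n) := ⟨by omega⟩
    (p + 1).val = if p.val = 2*n - 1 then 0 else p.val + 1 := by
  haveI : NeZero (2*n) := ⟨by omega⟩
  haveI : Fact (1 < 2*n) := ⟨by omega⟩
  rw [ZMod.val_add, ZMod.val_one]
  have hp : p.val < 2*n := ZMod.val_lt p
  split_ifs with h
  · rw [h, show 2*n-1+1 = 2*n by omega, Nat.mod_self]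
  · exact Nat.mod_eq_of_lt (by omega)


lemma vsub_eq [NeZero (2*n)] {x y : ZMod (2*n)} (a : ZMod (2*n))
    (h : (x - a).val = (y - a).val) : x = y := by
  have := ZMod.val_injective _ h
  exact sub_left_injective this

lemma vz [NeZero (2*n)] (x a : ZMod (2*n)) : (x - a).val = 0 ↔ x = a := by
  rw [ZMod.val_eq_zero, sub_eq_zero]

lemma ne_add_one (hn : 1 ≤ n) (a : ZMod (2*n)) : a ≠ a + 1 := by
  haveI : Fact (1 < 2*n) := ⟨by omega⟩
  intro h
  have h2 : a + 0 = a + 1 := by rw [add_zero]; exact h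
  have := add_left_cancel h2
  have hv : (0 : ZMod (2*n)).val = (1 : ZMod (2*n)).val := by rw [← this]
  rw [ZMod.val_zero, ZMod.val_one] at hv
  exact absurd hv (by omega)

lemma btw_compl (hn : 1 ≤ n) {a b x : ZMod (2*n)} (hab : a ≠ b) (hxa : x ≠ a) (hxb : x ≠ b) :
    StrictBtw n b a x ↔ ¬ StrictBtw n a b x := by
  haveI : NeZero (2*n) := ⟨by omega⟩
  rw [btw_rel a b a x, btw_rel a a b x, sub_self, ZMod.val_zero, dd_zero, dd_zero]
  have hB : (b-a).val < 2*n := ZMod.val_lt _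
  have hX : (x-a).val < 2*n := ZMod.val_lt _
  have hB0 : (b-a).val ≠ 0 := fun h => hab.symm ((vz b a).mp h)
  have hX0 : (x-a).val ≠ 0 := fun h => hxa ((vz x a).mp h)
  have hXB : (x-a).val ≠ (b-a).val := fun h => hxb (vsub_eq a h)
  rcases dd_cases (2*n) (x-a).val (b-a).val with ⟨h1,h2⟩|⟨h1,h2⟩ <;>
    rcases dd_cases (2*n) 0 (b-a).val with ⟨h3,h4⟩|⟨h3,h4⟩ <;> omega

lemma btw_succ (hn : 1 ≤ n) {c d x : ZMod (2*n)}
    (hxc : x ≠ c) (hxd : x ≠ d) (hyc : x + 1 ≠ c) (hyd : x + 1 ≠ d) :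
    StrictBtw n c d x ↔ StrictBtw n c d (x + 1) := by
  haveI : NeZero (2*n) := ⟨by omega⟩
  have e1 : (x + 1 - c) = (x - c) + 1 := by ring
  have e2 : (x + 1 - c).val = if (x-c).val = 2*n - 1 then 0 else (x-c).val + 1 := by
    rw [e1]; exact val_add_one hn _
  have hX0 : (x-c).val ≠ 0 := fun h => hxc ((vz x c).mp h)
  have hXD : (x-c).val ≠ (d-c).val := fun h => hxd (vsub_eq c h)
  have hY0 : (x+1-c).val ≠ 0 := fun h => hyc ((vz _ c).mp h)
  have hYD : (x+1-c).val ≠ (d-c).val := fun h => hyd (vsub_eq c h)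
  have hX : (x-c).val < 2*n := ZMod.val_lt _
  have hD : (d-c).val < 2*n := ZMod.val_lt _
  rw [StrictBtw, StrictBtw, e2] at *
  split_ifs at * with h <;> omega

lemma btw_self_succ_false (hn : 1 ≤ n) (a x : ZMod (2*n)) : ¬ StrictBtw n a (a+1) x := by
  haveI : NeZero (2*n) := ⟨by omega⟩
  haveI : Fact (1 < 2*n) := ⟨by omega⟩
  rintro ⟨h1, h2⟩
  rw [show a + 1 - a = 1 by ring, ZMod.val_one] at h2
  omega

lemma pair_eq {α : Type*} [DecidableEq α] {a b c d : α} (hab : a ≠ b)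
    (h : ({a,b} : Finset α) = {c,d}) : (a = c ∧ b = d) ∨ (a = d ∧ b = c) := by
  have ha : a ∈ ({c,d} : Finset α) := h ▸ (by simp)
  have hb : b ∈ ({c,d} : Finset α) := h ▸ (by simp)
  simp only [Finset.mem_insert, Finset.mem_singleton] at ha hb
  rcases ha with ha | ha <;> rcases hb with hb | hb
  · exact absurd (ha.trans hb.symm) hab
  · exact Or.inl ⟨ha, hb⟩
  · exact Or.inr ⟨ha, hb⟩
  · exact absurd (ha.trans hb.symm) hab

lemma crosses_intro {a b c d : ZMod (2*n)} (hab : a ≠ b) (hcd : c ≠ d)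
    (hdisj : Disjoint ({a,b} : Finset (ZMod (2*n))) {c,d})
    (hx : Xor' (StrictBtw n a b c) (StrictBtw n a b d)) : Crosses n {a,b} {c,d} :=
  ⟨a,b,c,d,rfl,rfl,hab,hcd,hdisj,hx⟩

lemma crosses_elim (hn : 1 ≤ n) {e f : Finset (ZMod (2*n))} {a b c d : ZMod (2*n)}
    (h : Crosses n e f) (he : e = {a,b}) (hf : f = {c,d}) (hab : a ≠ b) (hcd : c ≠ d) :
    Xor' (StrictBtw n a b c) (StrictBtw n a b d) := by
  obtain ⟨a',b',c',d',he',hf',hab',hcd',hdisj,hx⟩ := h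
  have hdisj2 : Disjoint ({a,b} : Finset (ZMod (2*n))) {c,d} := he ▸ hf ▸ hdisj
  have hca : c ≠ a ∧ c ≠ b := by
    have := Finset.disjoint_right.mp hdisj2 (show c ∈ ({c,d} : Finset _) by simp)
    simp only [Finset.mem_insert, Finset.mem_singleton] at this; tauto
  have hda : d ≠ a ∧ d ≠ b := by
    have := Finset.disjoint_right.mp hdisj2 (show d ∈ ({c,d} : Finset _) by simp)
    simp only [Finset.mem_insert, Finset.mem_singleton] at this; tauto
  have hab2 := pair_eq hab' (he'.symm.trans he)
  have hcd2 := pair_eq hcd' (hf'.symm.trans hf)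
  have key : ∀ p q u v : ZMod (2*n), (u = c ∧ v = d) ∨ (u = d ∧ v = c) →
      Xor' (StrictBtw n p q u) (StrictBtw n p q v) →
      Xor' (StrictBtw n p q c) (StrictBtw n p q d) := by
    rintro p q u v (⟨rfl, rfl⟩ | ⟨rfl, rfl⟩) hx
    · exact hx
    · exact (xor_comm _ _).mp hx
  rcases hab2 with ⟨h1, h2⟩ | ⟨h1, h2⟩
  · rw [h1, h2] at hx
    exact key a b _ _ hcd2 hx
  · rw [h1, h2] at hx
    have hx2 := key b a _ _ hcd2 hx
    rw [btw_compl hn hab hca.1 hca.2, btw_compl hn hab hda.1 hda.2] at hx2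
    unfold Xor' Xor at hx2 ⊢; tauto

lemma not_crosses_self {e : Finset (ZMod (2*n))} : ¬ Crosses n e e := by
  rintro ⟨a,b,c,d,he,hf,hab,hcd,hdisj,hx⟩
  rw [Finset.disjoint_self_iff_empty] at hdisj
  rw [hdisj] at he
  exact absurd he.symm (by simp)

lemma not_crosses_left_pair (hn : 1 ≤ n) {a : ZMod (2*n)} {f : Finset (ZMod (2*n))}
    (hf : ∃ c d, c ≠ d ∧ f = {c,d}) : ¬ Crosses n {a, a+1} f := by
  rintro h
  obtain ⟨c, d, hcd, rfl⟩ := hf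
  have hx := crosses_elim hn h rfl rfl (ne_add_one hn a) hcd
  rcases hx with ⟨h1, _⟩ | ⟨h1, _⟩ <;> exact btw_self_succ_false hn a _ h1

lemma not_crosses_right_pair (hn : 1 ≤ n) {a c d : ZMod (2*n)} (hcd : c ≠ d)
    (h1 : a ≠ c) (h2 : a ≠ d) (h3 : a + 1 ≠ c) (h4 : a + 1 ≠ d) :
    ¬ Crosses n {c,d} {a,a+1} := by
  intro h
  have hx := crosses_elim hn h rfl rfl hcd (ne_add_one hn a)
  have hiff := btw_succ hn h1 h2 h3 h4 (c := c) (d := d)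
  rcases hx with ⟨hp, hq⟩ | ⟨hp, hq⟩
  · exact hq (hiff.mp hp)
  · exact hq (hiff.mpr hp)




lemma chord_unique {S : Finset (Finset (ZMod (2*n)))} (hS : IsSplit n S)
    {e f : Finset (ZMod (2*n))} (he : e ∈ S) (hf : f ∈ S) {x : ZMod (2*n)}
    (hxe : x ∈ e) (hxf : x ∈ f) : e = f :=
  (hS.partitions x).unique ⟨he, hxe⟩ ⟨hf, hxf⟩

lemma chord_rep {S : Finset (Finset (ZMod (2*n)))} (hS : IsSplit n S)
    {e : Finset (ZMod (2*n))} (he : e ∈ S) {x : ZMod (2*n)} (hx : x ∈ e) :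
    ∃ y, y ≠ x ∧ e = {x, y} := by
  obtain ⟨p, q, hpq, rfl⟩ := Finset.card_eq_two.mp (hS.card_two e he)
  rcases Finset.mem_insert.mp hx with rfl | hx
  · exact ⟨q, hpq.symm, rfl⟩
  · rw [Finset.mem_singleton] at hx
    subst hx
    exact ⟨p, hpq, Finset.pair_comm p x⟩

lemma split_disjoint {S : Finset (Finset (ZMod (2*n)))} (hS : IsSplit n S)
    {e f : Finset (ZMod (2*n))} (he : e ∈ S) (hf : f ∈ S) (hef : e ≠ f) :
    Disjoint e f := by
  rw [Finset.disjoint_left]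
  intro x hxe hxf
  exact hef (chord_unique hS he hf hxe hxf)

lemma split_card (hn : 1 ≤ n) {S : Finset (Finset (ZMod (2*n)))} (hS : IsSplit n S) :
    S.card = n := by
  haveI : NeZero (2*n) := ⟨by omega⟩
  have hcover : S.biUnion id = Finset.univ := by
    ext x
    simp only [Finset.mem_biUnion, id, Finset.mem_univ, iff_true]
    obtain ⟨e, ⟨he, hxe⟩, _⟩ := hS.partitions x
    exact ⟨e, he, hxe⟩
  have hcb := Finset.card_biUnion (t := id) (s := S)
    (fun e he f hf hef => split_disjoint hS he hf hef)
  rw [hcover] at hcb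
  have h1 : (Finset.univ : Finset (ZMod (2*n))).card = 2*n := by
    rw [Finset.card_univ, ZMod.card]
  have h2 : ∑ e ∈ S, (id e).card = 2 * S.card := by
    rw [Finset.sum_congr rfl (fun e he => (hS.card_two e he : (id e).card = 2)),
      Finset.sum_const, smul_eq_mul]
    ring
  omega

lemma move_step (hn : 1 ≤ n) {S : Finset (Finset (ZMod (2*n)))} (hS : IsSplit n S)
    (a : ZMod (2*n)) (hpair : ({a, a+1} : Finset (ZMod (2*n))) ∉ S) :
    ∃ S', SplitMove n S S' ∧ ({a, a+1} : Finset (ZMod (2*n))) ∈ S' ∧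
      ∀ e ∈ S, a ∉ e → a + 1 ∉ e → e ∈ S' := by
  haveI : NeZero (2*n) := ⟨by omega⟩
  haveI : Fact (1 < 2*n) := ⟨by omega⟩
  obtain ⟨e₀, ⟨he₀S, ha_e₀⟩, _⟩ := hS.partitions a
  obtain ⟨m, hma, he₀⟩ := chord_rep hS he₀S ha_e₀
  obtain ⟨f₀, ⟨hf₀S, ha1_f₀⟩, _⟩ := hS.partitions (a+1)
  obtain ⟨j, hj1, hf₀⟩ := chord_rep hS hf₀S ha1_f₀
  have haa1 : a ≠ a + 1 := ne_add_one hn a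
  have hm_e₀ : m ∈ e₀ := by rw [he₀]; simp
  have hj_f₀ : j ∈ f₀ := by rw [hf₀]; simp
  have hm1 : m ≠ a + 1 := by
    intro h
    exact hpair (by rw [← h, ← he₀]; exact he₀S)
  have hja : j ≠ a := by
    intro h
    apply hpair
    have : f₀ = {a, a+1} := by rw [hf₀, h, Finset.pair_comm]
    rw [← this]; exact hf₀S
  have he₀f₀ : e₀ ≠ f₀ := by
    intro h
    have : a + 1 ∈ e₀ := by rw [h]; exact ha1_f₀
    rw [he₀] at this
    simp only [Finset.mem_insert, Finset.mem_singleton] at this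
    rcases this with h' | h'
    · exact haa1 h'.symm
    · exact hm1 h'.symm
  have hjm : j ≠ m := by
    intro h
    exact he₀f₀ (chord_unique hS he₀S hf₀S hm_e₀ (h ▸ hj_f₀))
  have h1v : (a + 1 - a).val = 1 := by
    rw [show a + 1 - a = (1 : ZMod (2*n)) by ring, ZMod.val_one]
  -- val facts
  have hS0 : (m - a).val ≠ 0 := fun h => hma ((vz m a).mp h)
  have hS1 : (m - a).val ≠ 1 := fun h => hm1 (vsub_eq a (h.trans h1v.symm))
  have hT0 : (j - a).val ≠ 0 := fun h => hja ((vz j a).mp h)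
  have hT1 : (j - a).val ≠ 1 := fun h => hj1 (vsub_eq a (h.trans h1v.symm))
  have hSlt : (m - a).val < 2*n := ZMod.val_lt _
  have hTlt : (j - a).val < 2*n := ZMod.val_lt _
  have hdisj₀ : Disjoint ({a, m} : Finset (ZMod (2*n))) {a+1, j} := by
    rw [Finset.disjoint_left]
    intro x hx hx'
    simp only [Finset.mem_insert, Finset.mem_singleton] at hx hx'
    rcases hx with rfl | rfl <;> rcases hx' with h | h
    · exact haa1 h
    · exact hja h.symm
    · exact hm1 h
    · exact hjm h.symm
  have hbtwj : StrictBtw n a m j := by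
    by_contra hno
    apply hS.noncrossing e₀ he₀S f₀ hf₀S
    rw [he₀, hf₀]
    refine crosses_intro hma.symm (fun h => hj1 h.symm) hdisj₀ (Or.inl ⟨?_, ?_⟩)
    · exact ⟨by rw [h1v]; omega, by rw [h1v]; omega⟩
    · exact hno
  obtain ⟨hT_pos, hTS⟩ := hbtwj
  -- the new chords
  set e' : Finset (ZMod (2*n)) := {a, a+1} with he'def
  set f' : Finset (ZMod (2*n)) := {j, m} with hf'def
  set S' : Finset (Finset (ZMod (2*n))) := insert e' (insert f' (S \ {e₀, f₀})) with hS'def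
  have hmem' : ∀ g, g ∈ S' ↔ (g = e' ∨ g = f' ∨ (g ∈ S ∧ g ≠ e₀ ∧ g ≠ f₀)) := by
    intro g
    simp only [hS'def, Finset.mem_insert, Finset.mem_sdiff, Finset.mem_singleton]
    tauto
  have hf'S : f' ∉ S := by
    intro h
    have : f' = e₀ := chord_unique hS h he₀S (by rw [hf'def]; simp) hm_e₀
    have ha_f' : a ∈ f' := by rw [this]; exact ha_e₀
    rw [hf'def] at ha_f'
    simp only [Finset.mem_insert, Finset.mem_singleton] at ha_f'
    rcases ha_f' with h' | h'
    · exact hja h'.symm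
    · exact hma h'.symm
  -- old chords avoid a, a+1, j, m
  have hnot_a : ∀ g ∈ S, g ≠ e₀ → a ∉ g :=
    fun g hg hne hag => hne (chord_unique hS hg he₀S hag ha_e₀)
  have hnot_a1 : ∀ g ∈ S, g ≠ f₀ → a + 1 ∉ g :=
    fun g hg hne hag => hne (chord_unique hS hg hf₀S hag ha1_f₀)
  have hnot_j : ∀ g ∈ S, g ≠ f₀ → j ∉ g :=
    fun g hg hne hag => hne (chord_unique hS hg hf₀S hag hj_f₀)
  have hnot_m : ∀ g ∈ S, g ≠ e₀ → m ∉ g :=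
    fun g hg hne hag => hne (chord_unique hS hg he₀S hag hm_e₀)
  -- card_two for S'
  have hcard2' : ∀ g ∈ S', g.card = 2 := by
    intro g hg
    rcases (hmem' g).mp hg with rfl | rfl | ⟨hgS, _, _⟩
    · exact Finset.card_pair haa1
    · exact Finset.card_pair hjm
    · exact hS.card_two g hgS
  have hrep : ∀ g ∈ S', ∃ c d, c ≠ d ∧ g = {c, d} :=
    fun g hg => Finset.card_eq_two.mp (hcard2' g hg)
  have he'S' : e' ∈ S' := (hmem' e').mpr (Or.inl rfl)
  have hf'S' : f' ∈ S' := (hmem' f').mpr (Or.inr (Or.inl rfl))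
  -- partitions for S'
  have hpart : ∀ x : ZMod (2*n), ∃! g, g ∈ S' ∧ x ∈ g := by
    intro x
    have hxe' : x ∈ e' ↔ (x = a ∨ x = a + 1) := by rw [he'def]; simp
    have hxf' : x ∈ f' ↔ (x = j ∨ x = m) := by rw [hf'def]; simp
    by_cases hxa : x = a ∨ x = a + 1
    · refine ⟨e', ⟨he'S', hxe'.mpr hxa⟩, ?_⟩
      rintro g ⟨hg, hxg⟩
      rcases (hmem' g).mp hg with rfl | rfl | ⟨hgS, hge, hgf⟩
      · rfl
      · exfalso
        rcases hxf'.mp hxg with rfl | rfl <;> rcases hxa with h | h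
        · exact hja h
        · exact hj1 h
        · exact hma h
        · exact hm1 h
      · exfalso
        rcases hxa with rfl | rfl
        · exact hnot_a g hgS hge hxg
        · exact hnot_a1 g hgS hgf hxg
    · by_cases hxj : x = j ∨ x = m
      · refine ⟨f', ⟨hf'S', hxf'.mpr hxj⟩, ?_⟩
        rintro g ⟨hg, hxg⟩
        rcases (hmem' g).mp hg with rfl | rfl | ⟨hgS, hge, hgf⟩
        · exact absurd (hxe'.mp hxg) hxa
        · rfl
        · exfalso
          rcases hxj with rfl | rfl
          · exact hnot_j g hgS hgf hxg
          · exact hnot_m g hgS hge hxg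
      · push_neg at hxa hxj
        obtain ⟨g₀, ⟨hg₀S, hxg₀⟩, hg₀u⟩ := hS.partitions x
        have hg₀e : g₀ ≠ e₀ := by
          intro h
          rw [h, he₀] at hxg₀
          simp only [Finset.mem_insert, Finset.mem_singleton] at hxg₀
          rcases hxg₀ with h' | h'
          · exact hxa.1 h'
          · exact hxj.2 h'
        have hg₀f : g₀ ≠ f₀ := by
          intro h
          rw [h, hf₀] at hxg₀
          simp only [Finset.mem_insert, Finset.mem_singleton] at hxg₀
          rcases hxg₀ with h' | h'
          · exact hxa.2 h'
          · exact hxj.1 h'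
        refine ⟨g₀, ⟨(hmem' g₀).mpr (Or.inr (Or.inr ⟨hg₀S, hg₀e, hg₀f⟩)), hxg₀⟩, ?_⟩
        rintro g ⟨hg, hxg⟩
        rcases (hmem' g).mp hg with rfl | rfl | ⟨hgS, hge, hgf⟩
        · exact absurd (hxe'.mp hxg) (by push_neg; exact hxa)
        · exact absurd (hxf'.mp hxg) (by push_neg; exact hxj)
        · exact hg₀u g ⟨hgS, hxg⟩
  -- heavy: old chords don't cross the new chord {j, m}
  have hkey : ∀ g ∈ S, g ≠ e₀ → g ≠ f₀ → (¬ Crosses n f' g) ∧ (¬ Crosses n g f') := by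
    intro g hgS hge hgf
    obtain ⟨u, v, huv, hgrep⟩ := Finset.card_eq_two.mp (hS.card_two g hgS)
    have hu_g : u ∈ g := by rw [hgrep]; simp
    have hv_g : v ∈ g := by rw [hgrep]; simp
    have hua : u ≠ a := fun h => hnot_a g hgS hge (h ▸ hu_g)
    have hva : v ≠ a := fun h => hnot_a g hgS hge (h ▸ hv_g)
    have hua1 : u ≠ a + 1 := fun h => hnot_a1 g hgS hgf (h ▸ hu_g)
    have hva1 : v ≠ a + 1 := fun h => hnot_a1 g hgS hgf (h ▸ hv_g)
    have huj : u ≠ j := fun h => hnot_j g hgS hgf (h ▸ hu_g)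
    have hvj : v ≠ j := fun h => hnot_j g hgS hgf (h ▸ hv_g)
    have hum : u ≠ m := fun h => hnot_m g hgS hge (h ▸ hu_g)
    have hvm : v ≠ m := fun h => hnot_m g hgS hge (h ▸ hv_g)
    have hd1 : Disjoint ({a, m} : Finset (ZMod (2*n))) {u, v} := by
      rw [← he₀, ← hgrep]
      exact split_disjoint hS he₀S hgS (fun h => hge h.symm)
    have hd2 : Disjoint ({a+1, j} : Finset (ZMod (2*n))) {u, v} := by
      rw [← hf₀, ← hgrep]
      exact split_disjoint hS hf₀S hgS (fun h => hgf h.symm)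
    have hx1 : StrictBtw n a m u ↔ StrictBtw n a m v := by
      rw [← not_xor]
      intro hx
      exact hS.noncrossing e₀ he₀S g hgS
        (he₀ ▸ hgrep ▸ crosses_intro hma.symm huv hd1 hx)
    have hx2 : StrictBtw n (a+1) j u ↔ StrictBtw n (a+1) j v := by
      rw [← not_xor]
      intro hx
      exact hS.noncrossing f₀ hf₀S g hgS
        (hf₀ ▸ hgrep ▸ crosses_intro (fun h => hj1 h.symm) huv hd2 hx)
    have hx3 : StrictBtw n u v a ↔ StrictBtw n u v m := by
      rw [← not_xor]
      intro hx
      exact hS.noncrossing g hgS e₀ he₀S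
        (hgrep ▸ he₀ ▸ crosses_intro huv hma.symm hd1.symm hx)
    have hx4 : StrictBtw n u v (a+1) ↔ StrictBtw n u v j := by
      rw [← not_xor]
      intro hx
      exact hS.noncrossing g hgS f₀ hf₀S
        (hgrep ▸ hf₀ ▸ crosses_intro huv (fun h => hj1 h.symm) hd2.symm hx)
    have hbridge : StrictBtw n u v a ↔ StrictBtw n u v (a+1) :=
      btw_succ hn hua.symm hva.symm hua1.symm hva1.symm
    constructor
    · intro hC
      have hXg := crosses_elim hn hC hf'def hgrep hjm huv
      rw [Xor', xor_iff_not_iff] at hXg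
      apply hXg
      rw [btw_rel a j m u, btw_rel a j m v]
      rw [btw_rel a a m u, btw_rel a a m v, sub_self, ZMod.val_zero] at hx1
      simp only [dd_zero] at hx1
      rw [btw_rel a (a+1) j u, btw_rel a (a+1) j v, h1v] at hx2
      have n1 : (u-a).val ≠ 0 := fun h => hua ((vz u a).mp h)
      have n2 : (v-a).val ≠ 0 := fun h => hva ((vz v a).mp h)
      have n3 : (u-a).val ≠ 1 := fun h => hua1 (vsub_eq a (h.trans h1v.symm))
      have n4 : (v-a).val ≠ 1 := fun h => hva1 (vsub_eq a (h.trans h1v.symm))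
      have n5 : (u-a).val ≠ (j-a).val := fun h => huj (vsub_eq a h)
      have n6 : (v-a).val ≠ (j-a).val := fun h => hvj (vsub_eq a h)
      have n7 : (u-a).val ≠ (m-a).val := fun h => hum (vsub_eq a h)
      have n8 : (v-a).val ≠ (m-a).val := fun h => hvm (vsub_eq a h)
      have l1 : (u-a).val < 2*n := ZMod.val_lt _
      have l2 : (v-a).val < 2*n := ZMod.val_lt _
      rcases dd_cases (2*n) (u-a).val (j-a).val with ⟨c1,c2⟩|⟨c1,c2⟩ <;>
      rcases dd_cases (2*n) (v-a).val (j-a).val with ⟨d1,d2⟩|⟨d1,d2⟩ <;>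
      rcases dd_cases (2*n) (m-a).val (j-a).val with ⟨e1,e2⟩|⟨e1,e2⟩ <;>
      rcases dd_cases (2*n) (u-a).val 1 with ⟨f1,f2⟩|⟨f1,f2⟩ <;>
      rcases dd_cases (2*n) (v-a).val 1 with ⟨g1,g2⟩|⟨g1,g2⟩ <;>
      rcases dd_cases (2*n) (j-a).val 1 with ⟨i1,i2⟩|⟨i1,i2⟩ <;>
        omega
    · intro hC
      have hXg := crosses_elim hn hC hgrep hf'def huv hjm
      rw [Xor', xor_iff_not_iff] at hXg
      exact hXg (hx4.symm.trans (hbridge.symm.trans hx3))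
  -- noncrossing for S'
  have hNC : ∀ g ∈ S', ∀ g' ∈ S', ¬ Crosses n g g' := by
    intro g hg g' hg' hC
    rcases (hmem' g).mp hg with rfl | rfl | ⟨hgS, hge, hgf⟩
    · rw [he'def] at hC
      exact not_crosses_left_pair hn (hrep g' hg') hC
    · rcases (hmem' g').mp hg' with rfl | rfl | ⟨hg'S, hg'e, hg'f⟩
      · rw [hf'def, he'def] at hC
        exact not_crosses_right_pair hn hjm hja.symm hma.symm
          (fun h => hj1 h.symm) (fun h => hm1 h.symm) hC
      · exact not_crosses_self hC
      · exact (hkey g' hg'S hg'e hg'f).1 hC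
    · rcases (hmem' g').mp hg' with rfl | rfl | ⟨hg'S, hg'e, hg'f⟩
      · obtain ⟨u, v, huv, hgrep⟩ := Finset.card_eq_two.mp (hS.card_two g hgS)
        have hu_g : u ∈ g := by rw [hgrep]; simp
        have hv_g : v ∈ g := by rw [hgrep]; simp
        rw [hgrep, he'def] at hC
        refine not_crosses_right_pair hn huv ?_ ?_ ?_ ?_ hC
        · exact fun h => hnot_a g hgS hge (h ▸ hu_g)
        · exact fun h => hnot_a g hgS hge (h ▸ hv_g)
        · exact fun h => hnot_a1 g hgS hgf (h ▸ hu_g)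
        · exact fun h => hnot_a1 g hgS hgf (h ▸ hv_g)
      · exact (hkey g hgS hge hgf).2 hC
      · exact hS.noncrossing g hgS g' hg'S hC
  have hsplit' : IsSplit n S' := ⟨hcard2', hpart, hNC⟩
  have hsub : ({e₀, f₀} : Finset (Finset (ZMod (2*n)))) ⊆ S := by
    intro g hg
    simp only [Finset.mem_insert, Finset.mem_singleton] at hg
    rcases hg with rfl | rfl
    · exact he₀S
    · exact hf₀S
  have hinter : S ∩ S' = S \ {e₀, f₀} := by
    ext g
    simp only [Finset.mem_inter, Finset.mem_sdiff, Finset.mem_insert, Finset.mem_singleton,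
      hmem' g, not_or]
    constructor
    · rintro ⟨hgS, rfl | rfl | ⟨_, hge, hgf⟩⟩
      · exact absurd hgS hpair
      · exact absurd hgS hf'S
      · exact ⟨hgS, hge, hgf⟩
    · rintro ⟨hgS, hge, hgf⟩
      exact ⟨hgS, Or.inr (Or.inr ⟨hgS, hge, hgf⟩)⟩
  have hcard : (S ∩ S').card = n - 2 := by
    rw [hinter, Finset.card_sdiff_of_subset hsub, split_card hn hS, Finset.card_pair he₀f₀]
  have hne : S ≠ S' := by
    intro h
    apply hpair
    rw [← he'def] at *
    rw [h]
    exact he'S'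
  refine ⟨S', ⟨hS, hsplit', hne, hcard⟩, he'S', ?_⟩
  intro e he hae ha1e
  refine (hmem' e).mpr (Or.inr (Or.inr ⟨he, ?_, ?_⟩))
  · intro h
    exact hae (by rw [h]; exact ha_e₀)
  · intro h
    exact ha1e (by rw [h]; exact ha1_f₀)


lemma chainLen_trans {α : Type*} {R : α → α → Prop} :
    ∀ {k1 k2 : ℕ} {a b c : α}, ChainLen R k1 a b → ChainLen R k2 b c →
      ChainLen R (k1 + k2) a c := by
  intro k1
  induction k1 with
  | zero =>
    intro k2 a b c h1 h2
    have : a = b := h1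
    rw [Nat.zero_add]
    exact this ▸ h2
  | succ k ih =>
    intro k2 a b c h1 h2
    obtain ⟨x, hax, hxb⟩ := h1
    have he : k + 1 + k2 = (k + k2) + 1 := by omega
    rw [he]
    exact ⟨x, hax, ih hxb h2⟩

lemma chainLen_symm {α : Type*} {R : α → α → Prop} (hsym : ∀ x y, R x y → R y x) :
    ∀ {k : ℕ} {a b : α}, ChainLen R k a b → ChainLen R k b a := by
  intro k
  induction k with
  | zero => intro a b h; exact (h : a = b).symm
  | succ k ih =>
    intro a b h
    obtain ⟨x, hax, hxb⟩ := h
    have h1 : ChainLen R k b x := ih hxb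
    have h2 : ChainLen R 1 x a := ⟨a, hsym a x hax, rfl⟩
    exact chainLen_trans h1 h2

lemma splitMove_symm {S S' : Finset (Finset (ZMod (2*n)))} (h : SplitMove n S S') :
    SplitMove n S' S := by
  obtain ⟨h1, h2, h3, h4⟩ := h
  exact ⟨h2, h1, h3.symm, by rwa [Finset.inter_comm]⟩

def Pair (n i : ℕ) : Finset (ZMod (2*n)) := {((2*i : ℕ) : ZMod (2*n)), ((2*i+1 : ℕ) : ZMod (2*n))}

def Fan (n : ℕ) : Finset (Finset (ZMod (2*n))) := (Finset.range n).image (Pair n)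

lemma pair_mem_iff (hn : 1 ≤ n) {i k : ℕ} (hi : i < n) (hk : k < n)
    (h : ((2*i : ℕ) : ZMod (2*n)) ∈ Pair n k ∨ ((2*i+1 : ℕ) : ZMod (2*n)) ∈ Pair n k) :
    i = k := by
  haveI : NeZero (2*n) := ⟨by omega⟩
  have v1 : ((2*i : ℕ) : ZMod (2*n)).val = 2*i := ZMod.val_natCast_of_lt (by omega)
  have v2 : ((2*i+1 : ℕ) : ZMod (2*n)).val = 2*i+1 := ZMod.val_natCast_of_lt (by omega)
  have v3 : ((2*k : ℕ) : ZMod (2*n)).val = 2*k := ZMod.val_natCast_of_lt (by omega)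
  have v4 : ((2*k+1 : ℕ) : ZMod (2*n)).val = 2*k+1 := ZMod.val_natCast_of_lt (by omega)
  unfold Pair at h
  simp only [Finset.mem_insert, Finset.mem_singleton] at h
  rcases h with (h | h) | (h | h) <;>
    [skip; skip; skip; skip] <;>
    (first
      | (have := congrArg ZMod.val h; rw [v1, v3] at this; omega)
      | (have := congrArg ZMod.val h; rw [v1, v4] at this; omega)
      | (have := congrArg ZMod.val h; rw [v2, v3] at this; omega)
      | (have := congrArg ZMod.val h; rw [v2, v4] at this; omega))

lemma fan_card (hn : 1 ≤ n) : (Fan n).card = n := by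
  rw [Fan, Finset.card_image_of_injOn, Finset.card_range]
  intro i hi k hk h
  simp only [Finset.mem_coe, Finset.mem_range] at hi hk
  apply pair_mem_iff hn hi hk
  left
  rw [← h, Pair]
  simp

lemma chain_aux (hn : 1 ≤ n) :
    ∀ d : ℕ, ∀ S : Finset (Finset (ZMod (2*n))), IsSplit n S →
      (∀ k, k + d < n → Pair n k ∈ S) →
      ∃ c, ChainLen (SplitMove n) c S (Fan n) := by
  haveI : NeZero (2*n) := ⟨by omega⟩
  intro d
  induction d with
  | zero =>
    intro S hS hall
    have hfan : Fan n ⊆ S := by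
      intro g hg
      rw [Fan, Finset.mem_image] at hg
      obtain ⟨i, hi, rfl⟩ := hg
      rw [Finset.mem_range] at hi
      exact hall i (by omega)
    have : Fan n = S :=
      Finset.eq_of_subset_of_card_le hfan (by rw [split_card hn hS, fan_card hn])
    exact ⟨0, this.symm⟩
  | succ d ih =>
    intro S hS hall
    by_cases hp : ∀ k, k + d < n → Pair n k ∈ S
    · exact ih S hS hp
    · push_neg at hp
      obtain ⟨k₀, hk₀n, hk₀⟩ := hp
      have hk₀eq : k₀ + d + 1 = n := by
        by_contra h
        exact hk₀ (hall k₀ (by omega))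
      set a : ZMod (2*n) := ((2*k₀ : ℕ) : ZMod (2*n)) with hadef
      have ha1 : a + 1 = ((2*k₀+1 : ℕ) : ZMod (2*n)) := by push_cast [hadef]; ring
      have hpa : ({a, a+1} : Finset (ZMod (2*n))) = Pair n k₀ := by
        rw [ha1, Pair]
      obtain ⟨S', hmove, hpS', hpres⟩ := move_step hn hS a (by rw [hpa]; exact hk₀)
      have hS' : IsSplit n S' := hmove.2.1
      have hall' : ∀ k, k + d < n → Pair n k ∈ S' := by
        intro k hk
        by_cases hkk : k = k₀
        · rw [hkk, ← hpa]; exact hpS'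
        · have hkk₀ : k < k₀ := by omega
          have hkS : Pair n k ∈ S := hall k (by omega)
          have hva : a.val = 2*k₀ := ZMod.val_natCast_of_lt (by omega)
          have hva1 : (a+1).val = 2*k₀+1 := by
            rw [ha1]; exact ZMod.val_natCast_of_lt (by omega)
          have hai : a ∉ Pair n k := by
            intro h
            have := pair_mem_iff hn (by omega : k₀ < n) (by omega : k < n) (Or.inl h)
            omega
          have hai1 : a + 1 ∉ Pair n k := by
            intro h
            have := pair_mem_iff hn (by omega : k₀ < n) (by omega : k < n) (Or.inr (by rw [← ha1]; exact h))
            omega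
          exact hpres _ hkS hai hai1
      obtain ⟨c, hc⟩ := ih S' hS' hall'
      exact ⟨c + 1, ⟨S', hmove, hc⟩⟩

lemma exists_chain_to_fan (hn : 1 ≤ n) {S : Finset (Finset (ZMod (2*n)))} (hS : IsSplit n S) :
    ∃ c, ChainLen (SplitMove n) c S (Fan n) :=
  chain_aux hn n S hS (fun k h => absurd h (by omega))

/-- For every `n ≥ 1` and any two splits `S` and `T` of the same `2n` points, `S` can be
transformed into `T` by a finite sequence of split moves; in particular the split distance
`d(S,T)` is finite and well defined. -/
theorem splits_connected_by_split_moves (n : ℕ) (hn : 1 ≤ n)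
    (S T : Finset (Finset (ZMod (2 * n)))) (hS : IsSplit n S) (hT : IsSplit n T) :
    ∃ k : ℕ, ChainLen (SplitMove n) k S T := by
  obtain ⟨k1, h1⟩ := exists_chain_to_fan hn hS
  obtain ⟨k2, h2⟩ := exists_chain_to_fan hn hT
  exact ⟨k1 + k2, chainLen_trans h1 (chainLen_symm (fun _ _ => splitMove_symm) h2)⟩

end MultiCrossing
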